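/- arXiv:1706.06833 — 3 statements merged into one kernel-verified Lean document; each statement's English description precedes it below -/
import Mathlib

section
/- Fix s with 0 < s < 2. Let A = [[a,0],[0,b]] be diagonal with 0 < a, b < 1 and a ≠ b, and let B = [[0,c],[d,0]] be anti-diagonal with 0 < c, d < 1. Define φ^s(M) = α₁(M)^s if s ≤ 1 and φ^s(M) = α₁(M)·α₂(M)^{s−1} if s > 1, where α₁(M) ≥ α₂(M) are the singular values of M. Then the ratio φ^s(Aⁿ·B·Aⁿ) / ( φ^s(Aⁿ·B) · φ^s(Aⁿ) ) tends to 0 as n → ∞. -/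
/-- The larger singular value of a 2×2 real matrix: its operator norm as a map
between Euclidean spaces. -/
noncomputable def alpha1 (M : Matrix (Fin 2) (Fin 2) ℝ) : ℝ :=
  ‖(Matrix.toEuclideanLin M).toContinuousLinearMap‖

/-- The smaller singular value of a 2×2 real matrix (the two singular values
multiply to |det M|). -/
noncomputable def alpha2 (M : Matrix (Fin 2) (Fin 2) ℝ) : ℝ :=
  |M.det| / alpha1 M

/-- Falconer's singular value function: φ^s(M) = α₁(M)^s for s ≤ 1 and
φ^s(M) = α₁(M)·α₂(M)^{s−1} for s > 1. -/
noncomputable def phi (s : ℝ) (M : Matrix (Fin 2) (Fin 2) ℝ) : ℝ :=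
  if s ≤ 1 then alpha1 M ^ s else alpha1 M * alpha2 M ^ (s - 1)

open Filter Matrix

lemma euclid_norm (v : EuclideanSpace ℝ (Fin 2)) : ‖v‖ = Real.sqrt (v 0 ^ 2 + v 1 ^ 2) := by
  rw [EuclideanSpace.norm_eq]
  simp [Fin.sum_univ_two, Real.norm_eq_abs, sq_abs]

lemma alpha1_eq_max (M : Matrix (Fin 2) (Fin 2) ℝ) (x y : ℝ) (hx : 0 ≤ x) (hy : 0 ≤ y)
    (h : ∀ v : EuclideanSpace ℝ (Fin 2),
      ‖Matrix.toEuclideanLin M v‖ ^ 2 = x ^ 2 * v 0 ^ 2 + y ^ 2 * v 1 ^ 2) :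
    alpha1 M = max x y := by
  have hK : 0 ≤ max x y := le_max_of_le_left hx
  apply le_antisymm
  · apply ContinuousLinearMap.opNorm_le_bound _ hK
    intro v
    have hcoe : (Matrix.toEuclideanLin M).toContinuousLinearMap v = Matrix.toEuclideanLin M v := rfl
    have hsq : ‖Matrix.toEuclideanLin M v‖ ^ 2 ≤ (max x y * ‖v‖) ^ 2 := by
      rw [h v, euclid_norm v, mul_pow, Real.sq_sqrt (by positivity)]
      have h1 : x ^ 2 ≤ (max x y) ^ 2 := pow_le_pow_left₀ hx (le_max_left _ _) 2
      have h2 : y ^ 2 ≤ (max x y) ^ 2 := pow_le_pow_left₀ hy (le_max_right _ _) 2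
      nlinarith [sq_nonneg (v 0), sq_nonneg (v 1)]
    have := Real.sqrt_le_sqrt hsq
    rw [Real.sqrt_sq (norm_nonneg _), Real.sqrt_sq (by positivity)] at this
    rw [hcoe]; exact this
  · rcases le_total x y with hxy | hxy
    · rw [max_eq_right hxy]
      set v : EuclideanSpace ℝ (Fin 2) := EuclideanSpace.single 1 (1:ℝ) with hv
      have hv0 : v 0 = 0 := by simp [hv, EuclideanSpace.single_apply]
      have hv1 : v 1 = 1 := by simp [hv, EuclideanSpace.single_apply]
      have hnv : ‖v‖ = 1 := by simp [hv, EuclideanSpace.norm_single]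
      have hTv : ‖Matrix.toEuclideanLin M v‖ = y := by
        have := h v
        rw [hv0, hv1] at this
        have : ‖Matrix.toEuclideanLin M v‖ ^ 2 = y ^ 2 := by rw [this]; ring
        nlinarith [norm_nonneg (Matrix.toEuclideanLin M v)]
      have hle := (Matrix.toEuclideanLin M).toContinuousLinearMap.le_opNorm v
      rw [show (Matrix.toEuclideanLin M).toContinuousLinearMap v = Matrix.toEuclideanLin M v from rfl,
        hTv, hnv, mul_one] at hle
      exact hle
    · rw [max_eq_left hxy]
      set v : EuclideanSpace ℝ (Fin 2) := EuclideanSpace.single 0 (1:ℝ) with hv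
      have hv0 : v 0 = 1 := by simp [hv, EuclideanSpace.single_apply]
      have hv1 : v 1 = 0 := by simp [hv, EuclideanSpace.single_apply]
      have hnv : ‖v‖ = 1 := by simp [hv, EuclideanSpace.norm_single]
      have hTv : ‖Matrix.toEuclideanLin M v‖ = x := by
        have := h v
        rw [hv0, hv1] at this
        have : ‖Matrix.toEuclideanLin M v‖ ^ 2 = x ^ 2 := by rw [this]; ring
        nlinarith [norm_nonneg (Matrix.toEuclideanLin M v)]
      have hle := (Matrix.toEuclideanLin M).toContinuousLinearMap.le_opNorm v
      rw [show (Matrix.toEuclideanLin M).toContinuousLinearMap v = Matrix.toEuclideanLin M v from rfl,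
        hTv, hnv, mul_one] at hle
      exact hle

lemma alpha1_diag (x y : ℝ) (hx : 0 ≤ x) (hy : 0 ≤ y) :
    alpha1 !![x, 0; 0, y] = max x y := by
  apply alpha1_eq_max _ _ _ hx hy
  intro v
  have h0 : (Matrix.toEuclideanLin !![x,0;0,y] v) 0 = x * v 0 := by
    simp [Matrix.toEuclideanLin_apply, Matrix.mulVec, dotProduct, Fin.sum_univ_two]
  have h1 : (Matrix.toEuclideanLin !![x,0;0,y] v) 1 = y * v 1 := by
    simp [Matrix.toEuclideanLin_apply, Matrix.mulVec, dotProduct, Fin.sum_univ_two]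
  rw [euclid_norm, Real.sq_sqrt (by positivity), h0, h1]
  ring

lemma alpha1_anti (p q : ℝ) (hp : 0 ≤ p) (hq : 0 ≤ q) :
    alpha1 !![0, p; q, 0] = max p q := by
  rw [max_comm]
  apply alpha1_eq_max _ _ _ hq hp
  intro v
  have h0 : (Matrix.toEuclideanLin !![0,p;q,0] v) 0 = p * v 1 := by
    simp [Matrix.toEuclideanLin_apply, Matrix.mulVec, dotProduct, Fin.sum_univ_two]
  have h1 : (Matrix.toEuclideanLin !![0,p;q,0] v) 1 = q * v 0 := by
    simp [Matrix.toEuclideanLin_apply, Matrix.mulVec, dotProduct, Fin.sum_univ_two]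
  rw [euclid_norm, Real.sq_sqrt (by positivity), h0, h1]
  ring

lemma pow_diag (x y : ℝ) (n : ℕ) :
    (!![x, 0; 0, y] : Matrix (Fin 2) (Fin 2) ℝ) ^ n = !![x ^ n, 0; 0, y ^ n] := by
  induction n with
  | zero => simp [Matrix.one_fin_two]
  | succ n ih =>
      rw [pow_succ, ih, Matrix.mul_fin_two]
      congr 1 <;> ring

lemma phi_nonneg (s : ℝ) (M : Matrix (Fin 2) (Fin 2) ℝ) : 0 ≤ phi s M := by
  unfold phi alpha2 alpha1
  split
  · exact Real.rpow_nonneg (norm_nonneg _) _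
  · exact mul_nonneg (norm_nonneg _)
      (Real.rpow_nonneg (div_nonneg (abs_nonneg _) (norm_nonneg _)) _)

lemma core_bound (a b c d t : ℝ) (ha0 : 0 < a) (hb0 : 0 < b) (hc0 : 0 < c) (hd0 : 0 < d)
    (ht : 0 < t) (n : ℕ) :
    (a ^ n * b ^ n * max c d) ^ t / ((max (a ^ n * c) (b ^ n * d)) ^ t * ((max a b) ^ n) ^ t)
      ≤ (max c d / min c d) ^ t * (((min a b) / (max a b)) ^ t) ^ n := by
  have hm0 : (0:ℝ) < max a b := lt_max_of_lt_left ha0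
  have hu0 : (0:ℝ) < min a b := lt_min ha0 hb0
  have hf0 : (0:ℝ) < min c d := lt_min hc0 hd0
  have he0 : (0:ℝ) < max c d := lt_max_of_lt_left hc0
  have han : (0:ℝ) < a ^ n := pow_pos ha0 n
  have hbn : (0:ℝ) < b ^ n := pow_pos hb0 n
  have hmn : (0:ℝ) < (max a b) ^ n := pow_pos hm0 n
  have hden : min c d * (max a b) ^ n ≤ max (a ^ n * c) (b ^ n * d) := by
    rcases le_total a b with hab | hab
    · have hmb : max a b = b := max_eq_right hab
      calc min c d * (max a b) ^ n = min c d * b ^ n := by rw [hmb]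
        _ ≤ b ^ n * d := by have := min_le_right c d; nlinarith
        _ ≤ _ := le_max_right _ _
    · have hma : max a b = a := max_eq_left hab
      calc min c d * (max a b) ^ n = min c d * a ^ n := by rw [hma]
        _ ≤ a ^ n * c := by have := min_le_left c d; nlinarith
        _ ≤ _ := le_max_left _ _
  have hABn : a ^ n * b ^ n = (max a b) ^ n * (min a b) ^ n := by
    rw [← mul_pow, ← mul_pow, max_mul_min]
  calc (a ^ n * b ^ n * max c d) ^ t / ((max (a ^ n * c) (b ^ n * d)) ^ t * ((max a b) ^ n) ^ t)
      ≤ (a ^ n * b ^ n * max c d) ^ t / ((min c d * (max a b) ^ n) ^ t * ((max a b) ^ n) ^ t) := by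
        have h1 : (min c d * (max a b) ^ n) ^ t ≤ (max (a ^ n * c) (b ^ n * d)) ^ t :=
          Real.rpow_le_rpow (by positivity) hden ht.le
        gcongr
    _ = ((a ^ n * b ^ n * max c d) / (min c d * (max a b) ^ n * (max a b) ^ n)) ^ t := by
        rw [← Real.mul_rpow (by positivity) (by positivity),
          ← Real.div_rpow (by positivity) (by positivity)]
    _ = ((max c d / min c d) * ((min a b) / (max a b)) ^ n) ^ t := by
        congr 1
        rw [hABn, div_pow]
        field_simp
    _ = (max c d / min c d) ^ t * (((min a b) / (max a b)) ^ t) ^ n := by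
        rw [Real.mul_rpow (by positivity) (by positivity)]
        congr 1
        rw [← Real.rpow_natCast ((min a b)/(max a b)) n, ← Real.rpow_mul (by positivity),
          mul_comm, Real.rpow_mul (by positivity), Real.rpow_natCast]

lemma phi_gt_one (s x D : ℝ) (hs : ¬ s ≤ 1) (hx : 0 < x) (hD : 0 ≤ D)
    (M : Matrix (Fin 2) (Fin 2) ℝ) (hα : alpha1 M = x) (hDet : |M.det| = D) :
    phi s M = x ^ (2 - s) * D ^ (s - 1) := by
  unfold phi alpha2
  rw [if_neg hs, hα, hDet, Real.div_rpow hD hx.le]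
  have hxx : x / x ^ (s - 1) = x ^ (2 - s) := by
    rw [show (2 - s : ℝ) = 1 - (s - 1) by ring, ← (Real.rpow_sub hx 1 (s - 1)).symm,
      Real.rpow_one]
  rw [← hxx]
  ring

lemma phi_le_one (s : ℝ) (hs : s ≤ 1) (M : Matrix (Fin 2) (Fin 2) ℝ) :
    phi s M = alpha1 M ^ s := by
  unfold phi; rw [if_pos hs]

theorem stmt_3 (s a b c d : ℝ) (hs0 : 0 < s) (hs2 : s < 2)
    (ha0 : 0 < a) (ha1 : a < 1) (hb0 : 0 < b) (hb1 : b < 1) (hab : a ≠ b)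
    (hc0 : 0 < c) (hc1 : c < 1) (hd0 : 0 < d) (hd1 : d < 1)
    (A B : Matrix (Fin 2) (Fin 2) ℝ)
    (hA : A = !![a, 0; 0, b]) (hB : B = !![0, c; d, 0]) :
    Tendsto (fun n : ℕ => phi s (A ^ n * B * A ^ n) / (phi s (A ^ n * B) * phi s (A ^ n)))
      atTop (nhds 0) := by
  subst hA; subst hB
  have hm0 : (0:ℝ) < max a b := lt_max_of_lt_left ha0
  have hu0 : (0:ℝ) < min a b := lt_min ha0 hb0
  have hf0 : (0:ℝ) < min c d := lt_min hc0 hd0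
  have he0 : (0:ℝ) < max c d := lt_max_of_lt_left hc0
  -- matrix computations
  have hAB : ∀ n : ℕ, (!![a,0;0,b] : Matrix (Fin 2) (Fin 2) ℝ) ^ n * !![0,c;d,0]
      = !![0, a ^ n * c; b ^ n * d, 0] := by
    intro n; rw [pow_diag, Matrix.mul_fin_two]; congr 1 <;> ring
  have hABA : ∀ n : ℕ, (!![a,0;0,b] : Matrix (Fin 2) (Fin 2) ℝ) ^ n * !![0,c;d,0]
      * (!![a,0;0,b]) ^ n = !![0, a ^ n * c * b ^ n; b ^ n * d * a ^ n, 0] := by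
    intro n; rw [hAB, pow_diag, Matrix.mul_fin_two]; congr 1 <;> ring
  -- alpha1 values
  have hα1 : ∀ n : ℕ, alpha1 ((!![a,0;0,b] : Matrix (Fin 2) (Fin 2) ℝ) ^ n) = (max a b) ^ n := by
    intro n
    rw [pow_diag, alpha1_diag _ _ (by positivity) (by positivity)]
    rcases le_total a b with h | h
    · rw [max_eq_right h, max_eq_right (pow_le_pow_left₀ ha0.le h n)]
    · rw [max_eq_left h, max_eq_left (pow_le_pow_left₀ hb0.le h n)]
  have hα2 : ∀ n : ℕ, alpha1 ((!![a,0;0,b] : Matrix (Fin 2) (Fin 2) ℝ) ^ n * !![0,c;d,0])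
      = max (a ^ n * c) (b ^ n * d) := by
    intro n; rw [hAB, alpha1_anti _ _ (by positivity) (by positivity)]
  have hα3 : ∀ n : ℕ, alpha1 ((!![a,0;0,b] : Matrix (Fin 2) (Fin 2) ℝ) ^ n * !![0,c;d,0]
      * (!![a,0;0,b]) ^ n) = a ^ n * b ^ n * max c d := by
    intro n
    rw [hABA, alpha1_anti _ _ (by positivity) (by positivity)]
    have han : (0:ℝ) < a ^ n := pow_pos ha0 n
    have hbn : (0:ℝ) < b ^ n := pow_pos hb0 n
    rcases le_total c d with h | h
    · rw [max_eq_right (by nlinarith [mul_nonneg (sub_nonneg.mpr h) (mul_pos han hbn).le]),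
        max_eq_right h]; ring
    · rw [max_eq_left (by nlinarith [mul_nonneg (sub_nonneg.mpr h) (mul_pos han hbn).le]),
        max_eq_left h]; ring
  -- determinants
  have hdet1 : ∀ n : ℕ, |((!![a,0;0,b] : Matrix (Fin 2) (Fin 2) ℝ) ^ n).det|
      = a ^ n * b ^ n := by
    intro n
    rw [pow_diag, Matrix.det_fin_two_of, show a ^ n * b ^ n - 0 * 0 = a ^ n * b ^ n by ring,
      abs_of_pos (by positivity)]
  have hdet2 : ∀ n : ℕ, |((!![a,0;0,b] : Matrix (Fin 2) (Fin 2) ℝ) ^ n * !![0,c;d,0]).det|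
      = a ^ n * c * (b ^ n * d) := by
    intro n
    rw [hAB, Matrix.det_fin_two_of,
      show (0:ℝ) * 0 - a ^ n * c * (b ^ n * d) = -(a ^ n * c * (b ^ n * d)) by ring,
      abs_neg, abs_of_pos (by positivity)]
  have hdet3 : ∀ n : ℕ, |((!![a,0;0,b] : Matrix (Fin 2) (Fin 2) ℝ) ^ n * !![0,c;d,0]
      * (!![a,0;0,b]) ^ n).det| = (a ^ n * c * b ^ n) * (b ^ n * d * a ^ n) := by
    intro n
    rw [hABA, Matrix.det_fin_two_of,
      show (0:ℝ) * 0 - a ^ n * c * b ^ n * (b ^ n * d * a ^ n)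
        = -((a ^ n * c * b ^ n) * (b ^ n * d * a ^ n)) by ring,
      abs_neg, abs_of_pos (by positivity)]
  set t : ℝ := if s ≤ 1 then s else 2 - s with ht_def
  have ht : 0 < t := by
    rw [ht_def]; split
    · exact hs0
    · linarith
  apply squeeze_zero (g := fun n : ℕ =>
      (max c d / min c d) ^ t * (((min a b) / (max a b)) ^ t) ^ n)
  · intro n
    exact div_nonneg (phi_nonneg _ _) (mul_nonneg (phi_nonneg _ _) (phi_nonneg _ _))
  · intro n
    by_cases hs1 : s ≤ 1
    · have htt : t = s := by rw [ht_def, if_pos hs1]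
      rw [htt, phi_le_one s hs1, phi_le_one s hs1, phi_le_one s hs1, hα1, hα2, hα3]
      exact core_bound a b c d s ha0 hb0 hc0 hd0 hs0 n
    · have htt : t = 2 - s := by rw [ht_def, if_neg hs1]
      have han : (0:ℝ) < a ^ n := pow_pos ha0 n
      have hbn : (0:ℝ) < b ^ n := pow_pos hb0 n
      rw [htt,
        phi_gt_one s _ _ hs1 (by positivity) (by positivity) _ (hα3 n) (hdet3 n),
        phi_gt_one s _ _ hs1 (by positivity) (by positivity) _ (hα2 n) (hdet2 n),
        phi_gt_one s _ _ hs1 (by positivity) (by positivity) _ (hα1 n) (hdet1 n)]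
      have hDsplit : ((a ^ n * c * b ^ n) * (b ^ n * d * a ^ n)) ^ (s - 1)
          = ((a ^ n * c * (b ^ n * d)) ^ (s - 1)) * ((a ^ n * b ^ n) ^ (s - 1)) := by
        rw [← Real.mul_rpow (by positivity) (by positivity)]
        congr 1; ring
      have hcancel :
          (a ^ n * b ^ n * max c d) ^ (2 - s) * ((a ^ n * c * b ^ n) * (b ^ n * d * a ^ n)) ^ (s - 1)
            / ((max (a ^ n * c) (b ^ n * d)) ^ (2 - s) * (a ^ n * c * (b ^ n * d)) ^ (s - 1)
              * (((max a b) ^ n) ^ (2 - s) * (a ^ n * b ^ n) ^ (s - 1)))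
          = (a ^ n * b ^ n * max c d) ^ (2 - s)
            / ((max (a ^ n * c) (b ^ n * d)) ^ (2 - s) * ((max a b) ^ n) ^ (2 - s)) := by
        rw [hDsplit]
        have h2 : (0:ℝ) < (a ^ n * c * (b ^ n * d)) ^ (s - 1) :=
          Real.rpow_pos_of_pos (by positivity) _
        have h1 : (0:ℝ) < (a ^ n * b ^ n) ^ (s - 1) :=
          Real.rpow_pos_of_pos (by positivity) _
        field_simp
      rw [hcancel]
      exact core_bound a b c d (2 - s) ha0 hb0 hc0 hd0 (by linarith [not_le.mp hs1]) n
  · have hr0 : (0:ℝ) ≤ ((min a b) / (max a b)) ^ t := Real.rpow_nonneg (by positivity) _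
    have hr1 : ((min a b) / (max a b)) ^ t < 1 :=
      Real.rpow_lt_one (by positivity) ((div_lt_one hm0).mpr (min_lt_max.mpr hab)) ht
    simpa using (tendsto_pow_atTop_nhds_zero_of_lt_one hr0 hr1).const_mul
      ((max c d / min c d) ^ t)
end

section
/- For 0 < s ≤ 2 the singular value function φ^s is submultiplicative: for all invertible real 2×2 matrices M, N with operator norm at most 1, φ^s(MN) ≤ φ^s(M)·φ^s(N). -/
lemma alpha1_nonneg (M : Matrix (Fin 2) (Fin 2) ℝ) : 0 ≤ alpha1 M := norm_nonneg _

lemma alpha1_pos (M : Matrix (Fin 2) (Fin 2) ℝ) (h : IsUnit M) : 0 < alpha1 M := by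
  rw [alpha1, norm_pos_iff]
  intro hc
  have hM0 : M ≠ 0 := h.ne_zero
  apply hM0
  have h1 : Matrix.toEuclideanLin M = 0 :=
    LinearMap.toContinuousLinearMap.injective (by simpa using hc)
  exact Matrix.toEuclideanLin.injective (by simpa using h1)

lemma alpha1_submul (M N : Matrix (Fin 2) (Fin 2) ℝ) :
    alpha1 (M * N) ≤ alpha1 M * alpha1 N := by
  rw [alpha1, alpha1, alpha1]
  apply ContinuousLinearMap.opNorm_le_bound _ (by positivity)
  intro x
  have h1 : (Matrix.toEuclideanLin (M * N)) x
      = (Matrix.toEuclideanLin M) ((Matrix.toEuclideanLin N) x) := by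
    rw [Matrix.toEuclideanLin_eq_toLin, Matrix.toLin_mul _ (PiLp.basisFun 2 ℝ (Fin 2)) _]
    simp [Matrix.toEuclideanLin_eq_toLin]
  show ‖(Matrix.toEuclideanLin (M * N)) x‖ ≤ _
  rw [h1]
  calc ‖(Matrix.toEuclideanLin M) ((Matrix.toEuclideanLin N) x)‖
      ≤ ‖(Matrix.toEuclideanLin M).toContinuousLinearMap‖ * ‖(Matrix.toEuclideanLin N) x‖ :=
        (Matrix.toEuclideanLin M).toContinuousLinearMap.le_opNorm _
    _ ≤ ‖(Matrix.toEuclideanLin M).toContinuousLinearMap‖ *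
        (‖(Matrix.toEuclideanLin N).toContinuousLinearMap‖ * ‖x‖) :=
        mul_le_mul_of_nonneg_left
          ((Matrix.toEuclideanLin N).toContinuousLinearMap.le_opNorm _) (norm_nonneg _)
    _ = _ := by ring

lemma phi_eq (s : ℝ) (hs : ¬ s ≤ 1) (A : Matrix (Fin 2) (Fin 2) ℝ) (hA : IsUnit A) :
    phi s A = alpha1 A ^ (2 - s) * |A.det| ^ (s - 1) := by
  have h1 := alpha1_pos A hA
  have h2 : alpha1 A ^ (2 - s) = alpha1 A / alpha1 A ^ (s - 1) := by
    rw [show (2 : ℝ) - s = 1 - (s - 1) by ring, Real.rpow_sub h1, Real.rpow_one]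
  rw [phi, if_neg hs, alpha2, Real.div_rpow (abs_nonneg _) h1.le, h2,
    mul_div_assoc', div_mul_eq_mul_div, mul_comm]

theorem stmt_4 (s : ℝ) (hs0 : 0 < s) (hs2 : s ≤ 2)
    (M N : Matrix (Fin 2) (Fin 2) ℝ)
    (hMdet : IsUnit M) (hNdet : IsUnit N)
    (hMnorm : alpha1 M ≤ 1) (hNnorm : alpha1 N ≤ 1) :
    phi s (M * N) ≤ phi s M * phi s N := by
  have hsub := alpha1_submul M N
  by_cases hs1 : s ≤ 1
  · rw [phi, phi, phi, if_pos hs1, if_pos hs1, if_pos hs1,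
      ← Real.mul_rpow (alpha1_nonneg M) (alpha1_nonneg N)]
    exact Real.rpow_le_rpow (alpha1_nonneg _) hsub hs0.le
  · have hMN : IsUnit (M * N) := hMdet.mul hNdet
    rw [phi_eq s hs1 _ hMN, phi_eq s hs1 _ hMdet, phi_eq s hs1 _ hNdet]
    have hdet : |(M * N).det| ^ (s - 1) = |M.det| ^ (s - 1) * |N.det| ^ (s - 1) := by
      rw [Matrix.det_mul, abs_mul, Real.mul_rpow (abs_nonneg _) (abs_nonneg _)]
    rw [hdet]
    have h2 : alpha1 (M * N) ^ (2 - s) ≤ alpha1 M ^ (2 - s) * alpha1 N ^ (2 - s) := by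
      rw [← Real.mul_rpow (alpha1_nonneg M) (alpha1_nonneg N)]
      exact Real.rpow_le_rpow (alpha1_nonneg _) hsub (by linarith)
    calc alpha1 (M * N) ^ (2 - s) * (|M.det| ^ (s - 1) * |N.det| ^ (s - 1))
        ≤ alpha1 M ^ (2 - s) * alpha1 N ^ (2 - s) * (|M.det| ^ (s - 1) * |N.det| ^ (s - 1)) :=
          mul_le_mul_of_nonneg_right h2 (by positivity)
      _ = alpha1 M ^ (2 - s) * |M.det| ^ (s - 1) * (alpha1 N ^ (2 - s) * |N.det| ^ (s - 1)) := by
          ring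
end

section
/- With τ and ω defined as the two codings of the full shift Σ = {1,…,d}^ℕ into {1,…,2d}^ℕ (τ keeps the first symbol, ω adds d to it, and both toggle the +d shift according to the parity of the count of symbols ≥ l seen so far), the images τ(Σ) and ω(Σ) are disjoint, both maps are injective, and τ(Σ) ∪ ω(Σ) equals the subshift Σ_A determined by the transition matrix A of the paper. -/
/-- The coding `τ`: the `m`-th symbol is shifted by `d` exactly when the number of
symbols `≥ L` among the first `m` symbols is odd. -/
def tau (d L : ℕ) (x : ℕ → ℕ) (m : ℕ) : ℕ :=
  if Even ((Finset.range m).filter (fun j => L ≤ x j)).card then x m else x m + d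

/-- The coding `ω`: the `m`-th symbol is shifted by `d` exactly when the number of
symbols `≥ L` among the first `m` symbols is even. -/
def omega' (d L : ℕ) (x : ℕ → ℕ) (m : ℕ) : ℕ :=
  if Even ((Finset.range m).filter (fun j => L ≤ x j)).card then x m + d else x m

/-- The transition relation of the subshift of finite type (0-indexed version of
the matrix `A` of the paper). -/
def transRel (d L i j : ℕ) : Prop :=
  if i < L ∨ d + L ≤ i then j < d else d ≤ j

lemma cnt_succ (L : ℕ) (x : ℕ → ℕ) (m : ℕ) :
    ((Finset.range (m+1)).filter (fun j => L ≤ x j)).card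
      = ((Finset.range m).filter (fun j => L ≤ x j)).card + (if L ≤ x m then 1 else 0) := by
  rw [Finset.range_add_one, Finset.filter_insert]
  split_ifs with h
  · rw [Finset.card_insert_of_notMem (by simp)]
  · simp

lemma cnt_succ_even (L : ℕ) (x : ℕ → ℕ) (m : ℕ) :
    (Even (((Finset.range (m+1)).filter (fun j => L ≤ x j)).card)
      ↔ (Even (((Finset.range m).filter (fun j => L ≤ x j)).card) ↔ ¬ L ≤ x m)) := by
  rw [cnt_succ]
  by_cases h : L ≤ x m <;> simp [h, Nat.even_add_one]

lemma step (d L : ℕ) (hL : 0 < L) (hLd : L < d) (a b : ℕ) (ha : a < d) (hb : b < d)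
    (e e' : Prop) [Decidable e] [Decidable e'] (hee : e' ↔ (e ↔ ¬ L ≤ a)) :
    transRel d L (if e then a else a + d) (if e' then b else b + d) := by
  by_cases he : e <;> by_cases hm : L ≤ a
  · have he' : ¬ e' := by simp [hee, he, hm]
    rw [if_pos he, if_neg he']
    unfold transRel; split_ifs <;> omega
  · have he' : e' := by simp [hee, he, hm]
    rw [if_pos he, if_pos he']
    unfold transRel; split_ifs <;> omega
  · have he' : e' := by simp [hee, he, hm]
    rw [if_neg he, if_pos he']
    unfold transRel; split_ifs <;> omega
  · have he' : ¬ e' := by simp [hee, he, hm]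
    rw [if_neg he, if_neg he']
    unfold transRel; split_ifs <;> omega

lemma step' (d L : ℕ) (hL : 0 < L) (hLd : L < d) (a b : ℕ) (ha : a < d) (hb : b < d)
    (e e' : Prop) [Decidable e] [Decidable e'] (hee : e' ↔ (e ↔ ¬ L ≤ a)) :
    transRel d L (if e then a + d else a) (if e' then b + d else b) := by
  have h1 : (if e then a + d else a) = if ¬ e then a else a + d := by
    by_cases he : e <;> simp [he]
  have h2 : (if e' then b + d else b) = if ¬ e' then b else b + d := by
    by_cases he : e' <;> simp [he]
  rw [h1, h2]
  exact step d L hL hLd a b ha hb _ _ (by tauto)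

theorem stmt_18 (d L : ℕ) (hL : 0 < L) (hLd : L < d) :
    Set.InjOn (tau d L) {x : ℕ → ℕ | ∀ m, x m < d} ∧
    Set.InjOn (omega' d L) {x : ℕ → ℕ | ∀ m, x m < d} ∧
    Disjoint (tau d L '' {x : ℕ → ℕ | ∀ m, x m < d})
      (omega' d L '' {x : ℕ → ℕ | ∀ m, x m < d}) ∧
    tau d L '' {x : ℕ → ℕ | ∀ m, x m < d} ∪ omega' d L '' {x : ℕ → ℕ | ∀ m, x m < d} =
      {y : ℕ → ℕ | (∀ m, y m < 2 * d) ∧ ∀ m, transRel d L (y m) (y (m + 1))} := by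
  have hd : 0 < d := hL.trans hLd
  have htau_mod : ∀ x : ℕ → ℕ, (∀ m, x m < d) → ∀ m, tau d L x m % d = x m := by
    intro x hx m
    simp only [tau]
    split_ifs
    · exact Nat.mod_eq_of_lt (hx m)
    · rw [Nat.add_mod_right]; exact Nat.mod_eq_of_lt (hx m)
  have homega_mod : ∀ x : ℕ → ℕ, (∀ m, x m < d) → ∀ m, omega' d L x m % d = x m := by
    intro x hx m
    simp only [omega']
    split_ifs
    · rw [Nat.add_mod_right]; exact Nat.mod_eq_of_lt (hx m)
    · exact Nat.mod_eq_of_lt (hx m)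
  refine ⟨?_, ?_, ?_, ?_⟩
  · intro x hx x' hx' h
    funext m
    have := congrFun h m
    have h1 := htau_mod x hx m
    have h2 := htau_mod x' hx' m
    rw [this] at h1; omega
  · intro x hx x' hx' h
    funext m
    have := congrFun h m
    have h1 := homega_mod x hx m
    have h2 := homega_mod x' hx' m
    rw [this] at h1; omega
  · rw [Set.disjoint_left]
    rintro y ⟨x, hx, rfl⟩ ⟨x', hx', he⟩
    have h0 := congrFun he 0
    have t0 : tau d L x 0 = x 0 := by simp [tau]
    have o0 : omega' d L x' 0 = x' 0 + d := by simp [omega']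
    rw [t0, o0] at h0
    have := hx 0
    omega
  · ext y
    simp only [Set.mem_union, Set.mem_image, Set.mem_setOf_eq]
    constructor
    · rintro (⟨x, hx, rfl⟩ | ⟨x, hx, rfl⟩)
      · refine ⟨fun m => ?_, fun m => ?_⟩
        · simp only [tau]; split_ifs <;> have := hx m <;> omega
        · simp only [tau]
          exact step d L hL hLd (x m) (x (m+1)) (hx m) (hx (m+1)) _ _ (cnt_succ_even L x m)
      · refine ⟨fun m => ?_, fun m => ?_⟩
        · simp only [omega']; split_ifs <;> have := hx m <;> omega
        · simp only [omega']
          exact step' d L hL hLd (x m) (x (m+1)) (hx m) (hx (m+1)) _ _ (cnt_succ_even L x m)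
    · rintro ⟨hy1, hy2⟩
      obtain ⟨x, hxdef⟩ : ∃ x : ℕ → ℕ, ∀ m, x m = y m % d := ⟨_, fun _ => rfl⟩
      have hxS : ∀ m, x m < d := fun m => (hxdef m) ▸ Nat.mod_lt _ hd
      have hxv : ∀ m, (y m < d ∧ x m = y m) ∨ (d ≤ y m ∧ x m + d = y m) := by
        intro m
        have h2d := hy1 m
        rw [hxdef m]
        by_cases h : y m < d
        · left; exact ⟨h, Nat.mod_eq_of_lt h⟩
        · right
          refine ⟨le_of_not_gt h, ?_⟩
          rw [Nat.mod_eq_sub_mod (le_of_not_gt h), Nat.mod_eq_of_lt (by omega)]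
          omega
      have key : ∀ m, (y m < d ↔
          (Even (((Finset.range m).filter (fun j => L ≤ x j)).card) ↔ y 0 < d)) := by
        intro m
        induction m with
        | zero => simp
        | succ n ih =>
          have hce := cnt_succ_even L x n
          have hT := hy2 n
          simp only [transRel] at hT
          have h1 := hy1 n
          have hv := hxv n
          split_ifs at hT with hcond <;>
            (by_cases he : Even (((Finset.range n).filter (fun j => L ≤ x j)).card) <;>
              by_cases hm : L ≤ x n <;> by_cases h0 : y 0 < d <;>
              (simp only [he, hm, h0, iff_true, iff_false, true_iff, false_iff, not_true,
                 not_false_iff, not_not, not_le, not_lt] at hce ih;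
               simp [hce, h0] <;> omega))
      by_cases h0 : y 0 < d
      · left
        refine ⟨x, hxS, funext fun m => ?_⟩
        have k := key m
        have hv := hxv m
        simp only [tau]
        split_ifs with he <;> simp [he, h0] at k <;> omega
      · right
        refine ⟨x, hxS, funext fun m => ?_⟩
        have k := key m
        have hv := hxv m
        simp only [omega']
        split_ifs with he <;> simp [he, h0] at k <;> omega
end
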